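/- Let X be a real uniformly smooth Banach space with modulus of smoothness ρ_X, and let S_1, S_2, … be a family of subsets of X such that a ∈ ⋂_{i=1}^∞ conv S_i and D = sup_i diam S_i < ∞. Then there is an absolute constant C > 0 (independent of X, the family, and a) and a transversal sequence x_1, x_2, … (that is, x_i ∈ S_i for every i) such that, setting a_k = (1/k)·∑_{i=1}^k x_i, for every integer k ≥ 1 and every real τ > 0 with ρ_X(τ) ≤ 1/k one has ‖a − a_k‖ ≤ C·D/(k·τ). -/

import Mathlib

open Asymptotics Filter Topology

/-- The modulus of smoothness (Lindenstrauss modulus) of a real normed space `X`: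
`ρ_X(τ) = sup { (‖x + τy‖ + ‖x − τy‖)/2 − 1 : ‖x‖ = ‖y‖ ≤ 1 }`. -/
noncomputable def modSmooth (X : Type*) [NormedAddCommGroup X] [NormedSpace ℝ X] (τ : ℝ) : ℝ :=
  sSup {r : ℝ | ∃ x y : X, ‖x‖ = ‖y‖ ∧ ‖y‖ ≤ 1 ∧
    r = (‖x + τ • y‖ + ‖x - τ • y‖) / 2 - 1}

section Aux

variable {X : Type*} [NormedAddCommGroup X] [NormedSpace ℝ X]

lemma modSmooth_set_nonempty (τ : ℝ) :
    {r : ℝ | ∃ x y : X, ‖x‖ = ‖y‖ ∧ ‖y‖ ≤ 1 ∧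
      r = (‖x + τ • y‖ + ‖x - τ • y‖) / 2 - 1}.Nonempty :=
  ⟨(‖(0:X) + τ • (0:X)‖ + ‖(0:X) - τ • (0:X)‖) / 2 - 1, 0, 0, by simp, by simp, rfl⟩

lemma modSmooth_bddAbove {τ : ℝ} (hτ : 0 ≤ τ) :
    BddAbove {r : ℝ | ∃ x y : X, ‖x‖ = ‖y‖ ∧ ‖y‖ ≤ 1 ∧
      r = (‖x + τ • y‖ + ‖x - τ • y‖) / 2 - 1} := by
  refine ⟨τ, ?_⟩
  rintro r ⟨x, y, hxy, hy, rfl⟩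
  have hx : ‖x‖ ≤ 1 := by rw [hxy]; exact hy
  have h1 : ‖x + τ • y‖ ≤ ‖x‖ + τ * ‖y‖ := by
    calc ‖x + τ • y‖ ≤ ‖x‖ + ‖τ • y‖ := norm_add_le _ _
    _ = ‖x‖ + τ * ‖y‖ := by rw [norm_smul, Real.norm_of_nonneg hτ]
  have h2 : ‖x - τ • y‖ ≤ ‖x‖ + τ * ‖y‖ := by
    calc ‖x - τ • y‖ ≤ ‖x‖ + ‖τ • y‖ := norm_sub_le _ _
    _ = ‖x‖ + τ * ‖y‖ := by rw [norm_smul, Real.norm_of_nonneg hτ]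
  have hy0 : (0:ℝ) ≤ ‖y‖ := norm_nonneg _
  nlinarith

lemma modSmooth_elem_le {τ : ℝ} (hτ : 0 ≤ τ) (x y : X) (hxy : ‖x‖ = ‖y‖) (hy : ‖y‖ ≤ 1) :
    (‖x + τ • y‖ + ‖x - τ • y‖) / 2 - 1 ≤ modSmooth X τ :=
  le_csSup (modSmooth_bddAbove hτ) ⟨x, y, hxy, hy, rfl⟩

lemma modSmooth_ge [Nontrivial X] {τ : ℝ} (hτ : 0 ≤ τ) :
    max 1 τ - 1 ≤ modSmooth X τ := by
  obtain ⟨z, hz⟩ := exists_ne (0 : X)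
  obtain ⟨u, hun⟩ : ∃ u : X, ‖u‖ = 1 := ⟨‖z‖⁻¹ • z, norm_smul_inv_norm hz⟩
  have key := modSmooth_elem_le hτ u u rfl (le_of_eq hun)
  have e1 : u + τ • u = (1 + τ) • u := by module
  have e2 : u - τ • u = (1 - τ) • u := by module
  rw [e1, e2, norm_smul, norm_smul, hun, mul_one, mul_one] at key
  rw [Real.norm_of_nonneg (by linarith), Real.norm_eq_abs] at key
  rcases le_total τ 1 with h | h
  · rw [abs_of_nonneg (by linarith)] at key
    rw [max_eq_left h]; linarith
  · rw [abs_of_nonpos (by linarith)] at key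
    rw [max_eq_right h]; linarith

lemma modSmooth_scale {lam τ : ℝ} (h0 : 0 ≤ lam) (h1 : lam ≤ 1) (hτ : 0 ≤ τ) :
    modSmooth X (lam * τ) ≤ lam * modSmooth X τ := by
  apply csSup_le (modSmooth_set_nonempty _)
  rintro r ⟨x, y, hxy, hy, rfl⟩
  have hx : ‖x‖ ≤ 1 := by rw [hxy]; exact hy
  have key := modSmooth_elem_le hτ x y hxy hy
  have e1 : x + (lam * τ) • y = lam • (x + τ • y) + (1 - lam) • x := by module
  have e2 : x - (lam * τ) • y = lam • (x - τ • y) + (1 - lam) • x := by module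
  have n1 : ‖x + (lam * τ) • y‖ ≤ lam * ‖x + τ • y‖ + (1 - lam) * ‖x‖ := by
    rw [e1]
    calc ‖lam • (x + τ • y) + (1 - lam) • x‖ ≤ ‖lam • (x + τ • y)‖ + ‖(1 - lam) • x‖ :=
      norm_add_le _ _
    _ = lam * ‖x + τ • y‖ + (1 - lam) * ‖x‖ := by
      rw [norm_smul, norm_smul, Real.norm_of_nonneg h0, Real.norm_of_nonneg (by linarith)]
  have n2 : ‖x - (lam * τ) • y‖ ≤ lam * ‖x - τ • y‖ + (1 - lam) * ‖x‖ := by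
    rw [e2]
    calc ‖lam • (x - τ • y) + (1 - lam) • x‖ ≤ ‖lam • (x - τ • y)‖ + ‖(1 - lam) • x‖ :=
      norm_add_le _ _
    _ = lam * ‖x - τ • y‖ + (1 - lam) * ‖x‖ := by
      rw [norm_smul, norm_smul, Real.norm_of_nonneg h0, Real.norm_of_nonneg (by linarith)]
  nlinarith

lemma norm_add_le_smooth {v w : X} (hv : v ≠ 0) (hw : w ≠ 0) (f : X →L[ℝ] ℝ)
    (hf1 : ‖f‖ = 1) (hfv : f v = ‖v‖) :
    ‖v + w‖ ≤ ‖v‖ + f w + 2 * ‖v‖ * modSmooth X (‖w‖ / ‖v‖) := by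
  have hv0 : (0:ℝ) < ‖v‖ := norm_pos_iff.2 hv
  have hw0 : (0:ℝ) < ‖w‖ := norm_pos_iff.2 hw
  set x : X := ‖v‖⁻¹ • v with hx
  set y : X := ‖w‖⁻¹ • w with hy
  set τ : ℝ := ‖w‖ / ‖v‖ with hτdef
  have hxn : ‖x‖ = 1 := norm_smul_inv_norm hv
  have hyn : ‖y‖ = 1 := norm_smul_inv_norm hw
  have hτ0 : 0 ≤ τ := div_nonneg (norm_nonneg _) (norm_nonneg _)
  have key := modSmooth_elem_le hτ0 x y (by rw [hxn, hyn]) (le_of_eq hyn)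
  have hcoef : τ * ‖w‖⁻¹ = ‖v‖⁻¹ := by field_simp [hτdef]; rw [hτdef, div_mul_cancel₀ _ (ne_of_gt hv0)]
  have e1 : x + τ • y = ‖v‖⁻¹ • (v + w) := by
    rw [hx, hy, smul_smul, hcoef, smul_add]
  have e2 : x - τ • y = ‖v‖⁻¹ • (v - w) := by
    rw [hx, hy, smul_smul, hcoef, smul_sub]
  have n1 : ‖x + τ • y‖ = ‖v‖⁻¹ * ‖v + w‖ := by
    rw [e1, norm_smul, Real.norm_of_nonneg (by positivity)]
  have n2 : ‖v‖⁻¹ * (‖v‖ - f w) ≤ ‖x - τ • y‖ := by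
    have hfle : f (x - τ • y) ≤ ‖x - τ • y‖ := by
      calc f (x - τ • y) ≤ |f (x - τ • y)| := le_abs_self _
      _ = ‖f (x - τ • y)‖ := (Real.norm_eq_abs _).symm
      _ ≤ ‖f‖ * ‖x - τ • y‖ := f.le_opNorm _
      _ = ‖x - τ • y‖ := by rw [hf1, one_mul]
    have : f (x - τ • y) = ‖v‖⁻¹ * (‖v‖ - f w) := by
      rw [e2, map_smul, map_sub, hfv]; simp [smul_eq_mul]
    linarith
  rw [n1] at key
  have hinv : ‖v‖⁻¹ * ‖v‖ = 1 := inv_mul_cancel₀ (ne_of_gt hv0)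
  have hstep : ‖v‖⁻¹ * ‖v + w‖ ≤ 1 + ‖v‖⁻¹ * f w + 2 * modSmooth X τ := by nlinarith
  have := mul_le_mul_of_nonneg_left hstep (le_of_lt hv0)
  have hvv : ‖v‖ * (‖v‖⁻¹ * ‖v + w‖) = ‖v + w‖ := by
    rw [← mul_assoc, mul_inv_cancel₀ (ne_of_gt hv0), one_mul]
  have hvf : ‖v‖ * (‖v‖⁻¹ * f w) = f w := by
    rw [← mul_assoc, mul_inv_cancel₀ (ne_of_gt hv0), one_mul]
  nlinarith

lemma exists_dual_ge {s : Set X} {a : X} (ha : a ∈ convexHull ℝ s) (f : X →L[ℝ] ℝ) :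
    ∃ p ∈ s, f a ≤ f p := by
  by_contra h
  push_neg at h
  have hsub : s ⊆ {z : X | f z < f a} := fun z hz => h z hz
  have hconv : Convex ℝ {z : X | f z < f a} := convex_halfSpace_lt ⟨f.map_add, f.map_smul⟩ _
  have := convexHull_min hsub hconv ha
  exact lt_irrefl (f a) this

end Aux

/-- Colorful no-dimension Carathéodory theorem in uniformly smooth Banach spaces:
for a family of sets `S i` with `a ∈ ⋂ conv (S i)` and diameters uniformly bounded
by `D`, there is an absolute constant `C > 0` and a transversal sequence `x i ∈ S i`
whose running averages `a_k` satisfy `‖a − a_k‖ ≤ C · D / (k · τ)` whenever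
`ρ_X(τ) ≤ 1/k`. -/
theorem colorful_no_dim_caratheodory {X : Type*} [NormedAddCommGroup X] [NormedSpace ℝ X]
    [CompleteSpace X]
    (hus : (fun t => modSmooth X t) =o[𝓝[>] (0 : ℝ)] fun t => t)
    (S : ℕ → Set X) (hSb : ∀ i, Bornology.IsBounded (S i))
    (D : ℝ) (hD : ∀ i, Metric.diam (S i) ≤ D)
    (a : X) (ha : a ∈ ⋂ i, convexHull ℝ (S i)) :
    ∃ C : ℝ, 0 < C ∧ ∃ x : ℕ → X, (∀ i, x i ∈ S i) ∧
      ∀ k : ℕ, 1 ≤ k → ∀ τ : ℝ, 0 < τ → modSmooth X τ ≤ 1 / (k : ℝ) →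
        ‖a - (k : ℝ)⁻¹ • ∑ i ∈ Finset.range k, x i‖ ≤ C * D / ((k : ℝ) * τ) := by
  have haS : ∀ i, a ∈ convexHull ℝ (S i) := fun i => Set.mem_iInter.1 ha i
  have hne : ∀ i, (S i).Nonempty := by
    intro i
    rcases Set.eq_empty_or_nonempty (S i) with h | h
    · have := haS i; rw [h, convexHull_empty] at this
      exact absurd this (Set.notMem_empty a)
    · exact h
  have hD0 : 0 ≤ D := le_trans Metric.diam_nonneg (hD 0)
  rcases subsingleton_or_nontrivial X with hX | hX
  · -- trivial space
    choose x hx using hne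
    refine ⟨5, by norm_num, x, hx, ?_⟩
    intro k hk τ hτ hρ
    have h0 : a - (k:ℝ)⁻¹ • ∑ i ∈ Finset.range k, x i = 0 := Subsingleton.elim _ _
    rw [h0, norm_zero]
    exact div_nonneg (by linarith) (by positivity)
  · -- nontrivial space
    have hdista : ∀ i (p : X), p ∈ S i → ‖a - p‖ ≤ D := by
      intro i p hp
      have h1 : convexHull ℝ (S i) ⊆ Metric.closedBall p D := by
        apply convexHull_min ?_ (convex_closedBall p D)
        intro z hz
        rw [Metric.mem_closedBall]
        exact (Metric.dist_le_diam_of_mem (hSb i) hz hp).trans (hD i)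
      have := h1 (haS i)
      rw [Metric.mem_closedBall, dist_eq_norm] at this
      exact this
    have hstep : ∀ (n : ℕ) (w : X), ∃ p : X, p ∈ S n ∧ ‖a - p‖ ≤ D ∧
        (w ≠ 0 → ‖w + (a - p)‖ ≤ ‖w‖ + 2 * ‖w‖ * modSmooth X (‖a - p‖ / ‖w‖)) := by
      intro n w
      by_cases hw : w = 0
      · obtain ⟨p, hp⟩ := hne n
        exact ⟨p, hp, hdista n p hp, fun h => absurd hw h⟩
      · obtain ⟨f, hf1, hfv⟩ := exists_dual_vector ℝ w (norm_ne_zero_iff.2 hw)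
        obtain ⟨p, hpS, hpf⟩ := exists_dual_ge (haS n) f
        refine ⟨p, hpS, hdista n p hpS, fun _ => ?_⟩
        have hfw : f (a - p) ≤ 0 := by rw [map_sub]; linarith
        by_cases hap : a - p = 0
        · rw [hap, add_zero, norm_zero]
          have hρ0 : (0:ℝ) ≤ modSmooth X (0 / ‖w‖) := by
            rw [zero_div]
            have h2 := modSmooth_ge (X := X) (τ := (0:ℝ)) le_rfl
            rw [max_eq_left (by norm_num : (0:ℝ) ≤ 1)] at h2
            linarith
          nlinarith [norm_nonneg w]
        · have hkey := norm_add_le_smooth hw hap f hf1 hfv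
          linarith
    choose step hstep₁ hstep₂ hstep₃ using hstep
    let v : ℕ → X := fun n => Nat.rec (0 : X) (fun n vn => vn + (a - step n vn)) n
    have hv0 : v 0 = 0 := rfl
    have hvs : ∀ n, v (n + 1) = v n + (a - step n (v n)) := fun n => rfl
    have hsum : ∀ m : ℕ, v m = ∑ i ∈ Finset.range m, (a - step i (v i)) := by
      intro m
      induction m with
      | zero => simp [hv0]
      | succ n ihn => rw [hvs, Finset.sum_range_succ, ihn]
    refine ⟨5, by norm_num, fun n => step n (v n), fun i => hstep₁ _ _, ?_⟩
    intro k hk τ hτ hρ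
    have hk0 : (0:ℝ) < (k:ℝ) := by exact_mod_cast hk
    have hkinv : 1 / (k:ℝ) ≤ 1 := by
      rw [div_le_one hk0]; exact_mod_cast hk
    have hρ1 : modSmooth X τ ≤ 1 := le_trans hρ hkinv
    have hge := modSmooth_ge (X := X) (le_of_lt hτ)
    have hτ2 : τ ≤ 2 := by
      rcases le_total τ 1 with h | h
      · linarith
      · rw [max_eq_right h] at hge; linarith
    have hρ0 : 0 ≤ modSmooth X τ := by
      have h1 : (1:ℝ) ≤ max 1 τ := le_max_left _ _
      linarith
    -- the key induction
    have main : ∀ j : ℕ, j ≤ k → ‖v j‖ ≤ 3 * D / τ + 2 * j * D / (τ * k) := by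
      intro j
      induction j with
      | zero =>
        intro _
        rw [hv0, norm_zero]
        have h1 : 0 ≤ 3 * D / τ := by positivity
        have h2 : 2 * ((0:ℕ):ℝ) * D / (τ * k) = 0 := by norm_num
        rw [h2]; linarith
      | succ j ih =>
        intro hjk
        have hjk' : j ≤ k := Nat.le_of_succ_le hjk
        have IH := ih hjk'
        have hwD : ‖a - step j (v j)‖ ≤ D := hstep₂ _ _
        have htri : ‖v (j + 1)‖ ≤ ‖v j‖ + ‖a - step j (v j)‖ := by
          rw [hvs]; exact norm_add_le _ _
        have hsplit : 2 * ((j:ℝ) + 1) * D / (τ * k) = 2 * (j:ℝ) * D / (τ * k) + 2 * D / (τ * k) := by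
          ring
        rcases lt_or_ge ‖v j‖ (D / τ) with hcase | hcase
        · have hD2 : D ≤ 2 * D / τ := by
            rw [le_div_iff₀ hτ]; nlinarith
          have hpos : 0 ≤ 2 * ((j:ℝ) + 1) * D / (τ * k) := by positivity
          have hv1 : ‖v (j+1)‖ ≤ D / τ + D := by linarith
          have h3 : D / τ + D ≤ 3 * D / τ := by
            rw [div_add' _ _ _ (ne_of_gt hτ), div_le_div_iff₀ hτ hτ]
            nlinarith [mul_le_mul_of_nonneg_left hτ2 (mul_nonneg hD0 hτ.le)]
          push_cast
          linarith
        · rcases eq_or_ne (v j) 0 with hvj | hvj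
          · have hDneg : D ≤ 0 := by
              rw [hvj, norm_zero] at hcase
              by_contra hcon
              push_neg at hcon
              have : 0 < D / τ := div_pos hcon hτ
              linarith
            have hDz : D = 0 := le_antisymm hDneg hD0
            have hb : ‖v (j + 1)‖ ≤ D := by
              have hz : ‖v j‖ = 0 := by rw [hvj, norm_zero]
              linarith
            rw [hDz] at hb ⊢
            simp only [mul_zero, zero_mul, zero_div, add_zero] at hb ⊢
            linarith
          · have hvj0 : (0:ℝ) < ‖v j‖ := norm_pos_iff.2 hvj
            have hin := hstep₃ j (v j) hvj
            set w : X := a - step j (v j) with hwdef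
            have hvjne : ‖v j‖ ≠ 0 := ne_of_gt hvj0
            have hτne : τ ≠ 0 := ne_of_gt hτ
            have hDle : D ≤ ‖v j‖ * τ := by
              rw [div_le_iff₀ hτ] at hcase; linarith
            set lam : ℝ := ‖w‖ / (‖v j‖ * τ) with hlamdef
            have hlam0 : 0 ≤ lam := by positivity
            have hlam1 : lam ≤ 1 := by
              rw [hlamdef, div_le_one (by positivity)]
              linarith
            have hlt : lam * τ = ‖w‖ / ‖v j‖ := by
              rw [hlamdef]; field_simp
            have hs := modSmooth_scale (X := X) hlam0 hlam1 (le_of_lt hτ)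
            rw [hlt] at hs
            have h1 : 2 * ‖v j‖ * modSmooth X (‖w‖ / ‖v j‖) ≤ 2 * D / (τ * k) := by
              have ha1 : 2 * ‖v j‖ * modSmooth X (‖w‖ / ‖v j‖) ≤
                  2 * ‖v j‖ * (lam * modSmooth X τ) :=
                mul_le_mul_of_nonneg_left hs (by positivity)
              have ha2 : 2 * ‖v j‖ * (lam * modSmooth X τ) = 2 * (‖w‖ / τ) * modSmooth X τ := by
                rw [hlamdef]; field_simp
              have ha3 : 2 * (‖w‖ / τ) * modSmooth X τ ≤ 2 * (‖w‖ / τ) * (1 / k) :=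
                mul_le_mul_of_nonneg_left hρ (by positivity)
              have ha4 : 2 * (‖w‖ / τ) * (1 / k) ≤ 2 * (D / τ) * (1 / k) := by
                have hwt : ‖w‖ / τ ≤ D / τ := by gcongr
                apply mul_le_mul_of_nonneg_right (by linarith) (by positivity)
              have ha5 : 2 * (D / τ) * (1 / k) = 2 * D / (τ * k) := by
                field_simp
              linarith
            have hnorm : ‖v (j + 1)‖ ≤ ‖v j‖ + 2 * ‖v j‖ * modSmooth X (‖w‖ / ‖v j‖) := by
              rw [hvs]; exact hin
            push_cast
            linarith
    have hvk := main k le_rfl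
    have hlast : 2 * (k:ℝ) * D / (τ * k) = 2 * D / τ := by
      field_simp
    rw [hlast] at hvk
    have h5 : ‖v k‖ ≤ 5 * D / τ := by
      have he : 3 * D / τ + 2 * D / τ = 5 * D / τ := by ring
      linarith
    have hrepr : a - (k:ℝ)⁻¹ • ∑ i ∈ Finset.range k, step i (v i) = (k:ℝ)⁻¹ • v k := by
      rw [hsum k, Finset.sum_sub_distrib, Finset.sum_const, Finset.card_range, smul_sub,
        ← Nat.cast_smul_eq_nsmul ℝ k a, smul_smul, inv_mul_cancel₀ (ne_of_gt hk0), one_smul]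
    rw [hrepr, norm_smul, Real.norm_of_nonneg (by positivity : (0:ℝ) ≤ (k:ℝ)⁻¹)]
    calc (k:ℝ)⁻¹ * ‖v k‖ ≤ (k:ℝ)⁻¹ * (5 * D / τ) :=
      mul_le_mul_of_nonneg_left h5 (by positivity)
    _ = 5 * D / ((k:ℝ) * τ) := by
      field_simp
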